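/- Parent-vertex cardinality: let n : Fin d → ℤ be a level-(ℓ+1) vertex index with 0 < n_j < k^{ℓ+1} for all j. Call a level-ℓ vertex index m a parent of n if for every admissible level-(ℓ+1) cell index i whose closed cell contains the point (n_j·h_{ℓ+1})_j, the closed cell of the parent index (j ↦ ⌊i_j/k⌋) at level ℓ contains the point (m_j·h_ℓ)_j. Then the number of parents of n equals 2^{#{j : k ∤ n_j}}. In particular a vertex coinciding with a coarse vertex has exactly one parent, a vertex interior to a coarse cell has exactly 2^d parents, and vertices on coarse faces and edges have a parent cardinality in between. -/

import Mathlib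

/-- Mesh width `h_ℓ = k^{-ℓ}`. -/
noncomputable def meshWidth (k ℓ : ℕ) : ℝ := ((k : ℝ) ^ ℓ)⁻¹

/-- Closed level-`ℓ` cell `C̄_{ℓ,i}`. -/
def closedCell (k d ℓ : ℕ) (i : Fin d → ℤ) : Set (Fin d → ℝ) :=
  {x | ∀ j, (i j : ℝ) * meshWidth k ℓ ≤ x j ∧ x j ≤ ((i j : ℝ) + 1) * meshWidth k ℓ}

/-- An index is admissible for level `ℓ` if `0 ≤ i_j < k^ℓ` for all `j`. -/
def admissible (k d ℓ : ℕ) (i : Fin d → ℤ) : Prop :=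
  ∀ j, 0 ≤ i j ∧ i j < (k : ℤ) ^ ℓ

/-- The level-`ℓ` vertex point with index `m`. -/
noncomputable def vertexPoint (k d ℓ : ℕ) (m : Fin d → ℤ) : Fin d → ℝ :=
  fun j => (m j : ℝ) * meshWidth k ℓ

/-- Index of the parent cell: `j ↦ ⌊i_j / k⌋`. -/
def parentIdx (k d : ℕ) (i : Fin d → ℤ) : Fin d → ℤ := fun j => Int.fdiv (i j) (k : ℤ)

lemma vertexPoint_mem_closedCell_iff (k d : ℕ) (hk : 2 ≤ k) (L : ℕ) (i x : Fin d → ℤ) :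
    vertexPoint k d L x ∈ closedCell k d L i ↔ ∀ j, i j ≤ x j ∧ x j ≤ i j + 1 := by
  have hk0 : (0:ℝ) < (k:ℝ) := by exact_mod_cast Nat.lt_of_lt_of_le Nat.zero_lt_two hk
  have hkpos : (0:ℝ) < ((k:ℝ) ^ L)⁻¹ := by positivity
  simp only [vertexPoint, closedCell, meshWidth, Set.mem_setOf_eq]
  refine forall_congr' fun j => ?_
  rw [mul_le_mul_iff_of_pos_right hkpos, mul_le_mul_iff_of_pos_right hkpos]
  constructor
  · rintro ⟨h1, h2⟩; exact ⟨by exact_mod_cast h1, by exact_mod_cast h2⟩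
  · rintro ⟨h1, h2⟩; exact ⟨by exact_mod_cast h1, by exact_mod_cast h2⟩

lemma fdiv_sub_one (k : ℕ) (hk : 2 ≤ k) (a : ℤ) :
    Int.fdiv (a - 1) (k : ℤ) =
      if (k : ℤ) ∣ a then Int.fdiv a (k : ℤ) - 1 else Int.fdiv a (k : ℤ) := by
  have hk0 : (0:ℤ) < (k:ℤ) := by exact_mod_cast Nat.lt_of_lt_of_le Nat.zero_lt_two hk
  have hk2 : (2:ℤ) ≤ (k:ℤ) := by exact_mod_cast hk
  rw [Int.fdiv_eq_ediv_of_nonneg _ hk0.le, Int.fdiv_eq_ediv_of_nonneg _ hk0.le]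
  have hmod := Int.emod_nonneg a (ne_of_gt hk0)
  have hmod2 := Int.emod_lt_of_pos a hk0
  have heq : (k:ℤ) * (a / k) + a % k = a := Int.mul_ediv_add_emod a k
  by_cases hdvd : (k:ℤ) ∣ a
  · rw [if_pos hdvd]
    have hr : a % k = 0 := Int.emod_eq_zero_of_dvd hdvd
    have h1 : a - 1 = ((k:ℤ) - 1) + (k:ℤ) * (a / k - 1) := by
      rw [mul_sub, mul_one]; linarith
    rw [h1, Int.add_mul_ediv_left _ _ (ne_of_gt hk0),
        Int.ediv_eq_zero_of_lt (by omega) (by omega)]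
    ring
  · rw [if_neg hdvd]
    have hr : a % k ≠ 0 := fun h => hdvd (Int.dvd_of_emod_eq_zero h)
    have h1 : a - 1 = (a % k - 1) + (k:ℤ) * (a / k) := by linarith
    rw [h1, Int.add_mul_ediv_left _ _ (ne_of_gt hk0),
        Int.ediv_eq_zero_of_lt (by omega) (by omega), zero_add]

theorem parent_vertex_card (k d : ℕ) (hk : 2 ≤ k) (hd : 1 ≤ d) (ℓ : ℕ)
    (n : Fin d → ℤ) (hn : ∀ j, 0 < n j ∧ n j < (k : ℤ) ^ (ℓ + 1)) :
    Set.ncard {m : Fin d → ℤ |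
        ∀ i : Fin d → ℤ, admissible k d (ℓ + 1) i →
          vertexPoint k d (ℓ + 1) n ∈ closedCell k d (ℓ + 1) i →
          vertexPoint k d ℓ m ∈ closedCell k d ℓ (parentIdx k d i)}
      = 2 ^ Set.ncard {j : Fin d | ¬ (k : ℤ) ∣ n j} := by
  classical
  have hmem := vertexPoint_mem_closedCell_iff k d hk
  set T : Fin d → Finset ℤ := fun j =>
    if (k:ℤ) ∣ n j then {Int.fdiv (n j) (k:ℤ)}
    else {Int.fdiv (n j) (k:ℤ), Int.fdiv (n j) (k:ℤ) + 1} with hT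
  have hset : {m : Fin d → ℤ |
        ∀ i : Fin d → ℤ, admissible k d (ℓ + 1) i →
          vertexPoint k d (ℓ + 1) n ∈ closedCell k d (ℓ + 1) i →
          vertexPoint k d ℓ m ∈ closedCell k d ℓ (parentIdx k d i)}
      = ↑(Fintype.piFinset T) := by
    ext m
    rw [Set.mem_setOf_eq, Finset.mem_coe, Fintype.mem_piFinset]
    constructor
    · intro hpar j
      have hadm1 : admissible k d (ℓ+1) n := fun j' => ⟨(hn j').1.le, (hn j').2⟩
      have hx1 : vertexPoint k d (ℓ+1) n ∈ closedCell k d (ℓ+1) n :=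
        (hmem _ _ _).2 fun j' => ⟨le_refl _, by omega⟩
      have h1 := ((hmem _ _ _).1 (hpar n hadm1 hx1)) j
      set i2 : Fin d → ℤ := Function.update n j (n j - 1) with hi2
      have hadm2 : admissible k d (ℓ+1) i2 := by
        intro j'
        rcases hn j' with ⟨ha, hb⟩
        rcases hn j with ⟨ha', hb'⟩
        simp only [hi2, Function.update_apply]
        split <;> omega
      have hx2 : vertexPoint k d (ℓ+1) n ∈ closedCell k d (ℓ+1) i2 := by
        refine (hmem _ _ _).2 fun j' => ?_
        simp only [hi2, Function.update_apply]
        split <;> [skip; skip] <;> first | (rename_i h; subst h; omega) | omega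
      have h2 := ((hmem _ _ _).1 (hpar i2 hadm2 hx2)) j
      have hval : i2 j = n j - 1 := Function.update_self j _ n
      simp only [parentIdx, hval] at h2
      simp only [parentIdx] at h1
      have hfd := fdiv_sub_one k hk (n j)
      rw [hT]
      by_cases hdvd : (k:ℤ) ∣ n j
      · rw [hfd, if_pos hdvd] at h2
        simp only [if_pos hdvd, Finset.mem_singleton]
        omega
      · rw [hfd, if_neg hdvd] at h2
        simp only [if_neg hdvd, Finset.mem_insert, Finset.mem_singleton]
        omega
    · intro hmT i hadm hx
      refine (hmem _ _ _).2 fun j => ?_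
      have hx' := ((hmem _ _ _).1 hx) j
      have hij : i j = n j ∨ i j = n j - 1 := by omega
      have hmTj := hmT j
      rw [hT] at hmTj
      have hfd := fdiv_sub_one k hk (n j)
      simp only [parentIdx]
      by_cases hdvd : (k:ℤ) ∣ n j
      · rw [if_pos hdvd] at hfd
        simp only [if_pos hdvd, Finset.mem_singleton] at hmTj
        rcases hij with h | h <;> rw [h] <;> [skip; rw [hfd]] <;> omega
      · rw [if_neg hdvd] at hfd
        simp only [if_neg hdvd, Finset.mem_insert, Finset.mem_singleton] at hmTj
        rcases hij with h | h <;> rw [h] <;> [skip; rw [hfd]] <;> omega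
  rw [hset, Set.ncard_coe_finset, Fintype.card_piFinset]
  have hcard : ∀ j, (T j).card = if (k:ℤ) ∣ n j then 1 else 2 := by
    intro j
    simp only [hT]
    split_ifs with h
    · simp
    · rw [Finset.card_insert_of_notMem (by simp), Finset.card_singleton]
  have hrhs : Set.ncard {j : Fin d | ¬ (k:ℤ) ∣ n j}
      = (Finset.univ.filter fun j => ¬ (k:ℤ) ∣ n j).card := by
    rw [Set.ncard_eq_toFinset_card']
    congr 1
    ext j
    simp
  rw [hrhs]
  calc (∏ j, (T j).card) = ∏ j, (if (k:ℤ) ∣ n j then 1 else 2) := by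
        exact Finset.prod_congr rfl fun j _ => hcard j
    _ = 2 ^ (Finset.univ.filter fun j => ¬ (k:ℤ) ∣ n j).card := by
        rw [Finset.prod_ite, Finset.prod_const_one, Finset.prod_const, one_mul]
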